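/- Suppose (Σ̄₁,…,Σ̄_{m̂+1}) is a tuple of symmetric p×p real matrices belonging to the restricted set O (i.e., Σ̄_{uv,j} = 0 for every j and every pair (u,v) with u ≠ v and (u,v) ∉ S_j) that minimizes the block-wise criterion F over O. Suppose moreover that there exist real numbers Ē_{uv,1t} (1 ≤ u ≠ v ≤ p, 1 ≤ t ≤ T) and symmetric p×p matrices Ē_{2,T̂_j} (1 ≤ j ≤ m̂), with the conventions Ē_{2,T̂_0} := 0 and Ē_{2,T̂_{m̂+1}} := 0 and ξ_{2,T̂_0} := 0 and ξ_{2,T̂_{m̂+1}} := 0, satisfying: (a) Ē_{uv,1t} ∈ [−1,1] for all u ≠ v and t, and Ē_{uv,1t} = sgn(Σ̄_{uv,j}) whenever t ∈ B_j and Σ̄_{uv,j} ≠ 0; (b) ‖Ē_{2,T̂_j}‖_F ≤ 1 for all 1 ≤ j ≤ m̂, and Ē_{2,T̂_j} = (Σ̄_{j+1} − Σ̄_j)/‖Σ̄_{j+1} − Σ̄_j‖_F whenever Σ̄_{j+1} ≠ Σ̄_j; (c) for every 1 ≤ j ≤ m̂+1, (1/T)·∑_{t ∈ B_j} (Σ̄_j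 − X_t X_tᵀ) + λ₁·∑_{t ∈ B_j} M_t + λ₂·(ξ_{2,T̂_{j−1}}·Ē_{2,T̂_{j−1}} − ξ_{2,T̂_j}·Ē_{2,T̂_j}) = 0, where M_t is the p×p matrix with (u,v) entry ξ_{uv,1t}·Ē_{uv,1t} for u ≠ v and 0 on the diagonal; and (d) strict dual feasibility: for every j and every pair (u,v) with u ≠ v and (u,v) ∉ S_j, |∑_{t ∈ B_j} ξ_{uv,1t}·Ē_{uv,1t}| < ∑_{t ∈ B_j} ξ_{uv,1t}. Then every tuple (Σ̂₁,…,Σ̂_{m̂+1}) of symmetric p×p real matrices minimizing F over all tuples of symmetric p×p real matrices satisfies Σ̂_{uv,j} = 0 for every j = 1,…,m̂+1 and every pair (u,v) with u ≠ v and (u,v) ∉ S_j. -/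

import Mathlib

open Matrix Finset

/-- Frobenius norm of a real `p × p` matrix. -/
noncomputable def frob {p : ℕ} (A : Matrix (Fin p) (Fin p) ℝ) : ℝ :=
  Real.sqrt (∑ u, ∑ v, (A u v) ^ 2)

/-- The block-wise criterion `F` associated with the estimated change points
`1 = T̂₀ < T̂₁ < ⋯ < T̂_m < T̂_{m+1} = T+1`, with blocks
`B_j = {T̂_{j-1}, …, T̂_j - 1}` (here `Tc j` plays the role of `T̂_j` and `ξ2 j` the
role of `ξ_{2,T̂_j}`). -/
noncomputable def blockCrit (p T m : ℕ) (X : ℕ → Fin p → ℝ) (lam1 lam2 : ℝ)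
    (Tc : ℕ → ℕ) (ξ1 : Fin p → Fin p → ℕ → ℝ) (ξ2 : ℕ → ℝ)
    (Sig' : ℕ → Matrix (Fin p) (Fin p) ℝ) : ℝ :=
  ∑ j ∈ Finset.Icc 1 (m + 1), (1 / (2 * (T : ℝ))) *
      ∑ t ∈ Finset.Ico (Tc (j - 1)) (Tc j),
        (frob (Matrix.vecMulVec (X t) (X t) - Sig' j)) ^ 2
    + lam1 * ∑ j ∈ Finset.Icc 1 (m + 1), ∑ u, ∑ v,
        (if u ≠ v then (∑ t ∈ Finset.Ico (Tc (j - 1)) (Tc j), ξ1 u v t) * |Sig' j u v|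
          else 0)
    + lam2 * ∑ j ∈ Finset.Icc 1 m, ξ2 j * frob (Sig' (j + 1) - Sig' j)

noncomputable def mip {p : ℕ} (A B : Matrix (Fin p) (Fin p) ℝ) : ℝ :=
  ∑ u, ∑ v, A u v * B u v

lemma mip_add_left {p : ℕ} (A B C : Matrix (Fin p) (Fin p) ℝ) :
    mip (A + B) C = mip A C + mip B C := by
  simp [mip, add_mul, Finset.sum_add_distrib]

lemma mip_add_right {p : ℕ} (A B C : Matrix (Fin p) (Fin p) ℝ) :
    mip A (B + C) = mip A B + mip A C := by
  simp [mip, mul_add, Finset.sum_add_distrib]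

lemma mip_sub_left {p : ℕ} (A B C : Matrix (Fin p) (Fin p) ℝ) :
    mip (A - B) C = mip A C - mip B C := by
  simp [mip, sub_mul, Finset.sum_sub_distrib]

lemma mip_sub_right {p : ℕ} (A B C : Matrix (Fin p) (Fin p) ℝ) :
    mip A (B - C) = mip A B - mip A C := by
  simp [mip, mul_sub, Finset.sum_sub_distrib]

lemma mip_neg_left {p : ℕ} (A B : Matrix (Fin p) (Fin p) ℝ) :
    mip (-A) B = - mip A B := by
  simp [mip, Matrix.neg_apply, Finset.sum_neg_distrib]

lemma mip_smul_left {p : ℕ} (c : ℝ) (A B : Matrix (Fin p) (Fin p) ℝ) :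
    mip (c • A) B = c * mip A B := by
  simp [mip, Matrix.smul_apply, smul_eq_mul, mul_assoc, Finset.mul_sum]

lemma mip_zero_left {p : ℕ} (B : Matrix (Fin p) (Fin p) ℝ) : mip 0 B = 0 := by
  simp [mip]

lemma mip_comm {p : ℕ} (A B : Matrix (Fin p) (Fin p) ℝ) : mip A B = mip B A := by
  simp [mip, mul_comm]

lemma mip_sum_left {p : ℕ} {α : Type*} (s : Finset α) (f : α → Matrix (Fin p) (Fin p) ℝ)
    (B : Matrix (Fin p) (Fin p) ℝ) : mip (∑ t ∈ s, f t) B = ∑ t ∈ s, mip (f t) B := by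
  induction s using Finset.cons_induction with
  | empty => simp [mip]
  | cons a s ha ih => rw [Finset.sum_cons, Finset.sum_cons, mip_add_left, ih]

lemma mip_self_nonneg {p : ℕ} (A : Matrix (Fin p) (Fin p) ℝ) : 0 ≤ mip A A :=
  Finset.sum_nonneg fun _ _ => Finset.sum_nonneg fun _ _ => mul_self_nonneg _

lemma mip_self_entry {p : ℕ} (A : Matrix (Fin p) (Fin p) ℝ) (u v : Fin p) :
    A u v * A u v ≤ mip A A := by
  have h1 : A u v * A u v ≤ ∑ w, A u w * A u w :=
    Finset.single_le_sum (f := fun w => A u w * A u w)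
      (fun i _ => mul_self_nonneg _) (Finset.mem_univ v)
  exact h1.trans (Finset.single_le_sum (f := fun w => ∑ v', A w v' * A w v')
    (fun i _ => Finset.sum_nonneg fun _ _ => mul_self_nonneg _) (Finset.mem_univ u))

lemma frob_nonneg {p : ℕ} (A : Matrix (Fin p) (Fin p) ℝ) : 0 ≤ frob A :=
  Real.sqrt_nonneg _

lemma frob_sq {p : ℕ} (A : Matrix (Fin p) (Fin p) ℝ) : frob A ^ 2 = mip A A := by
  rw [frob, Real.sq_sqrt (by positivity)]
  simp [mip, sq]

lemma frob_zero {p : ℕ} : frob (0 : Matrix (Fin p) (Fin p) ℝ) = 0 := by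
  simp [frob]

lemma frob_pos {p : ℕ} (A : Matrix (Fin p) (Fin p) ℝ) (h : A ≠ 0) : 0 < frob A := by
  rcases (frob_nonneg A).lt_or_eq with h1 | h1
  · exact h1
  · exfalso; apply h
    have h2 : mip A A = 0 := by rw [← frob_sq, ← h1]; ring
    ext u v
    have h3 := mip_self_entry A u v
    have h4 := mul_self_nonneg (A u v)
    have h5 : A u v * A u v = 0 := le_antisymm (h3.trans h2.le) h4
    simpa using mul_self_eq_zero.mp h5

lemma mip_cs {p : ℕ} (A B : Matrix (Fin p) (Fin p) ℝ) : mip A B ≤ frob A * frob B := by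
  have h1 : mip A B = ∑ x : Fin p × Fin p, A x.1 x.2 * B x.1 x.2 :=
    (Fintype.sum_prod_type (f := fun x : Fin p × Fin p => A x.1 x.2 * B x.1 x.2)).symm
  have h2 : frob A = Real.sqrt (∑ x : Fin p × Fin p, (A x.1 x.2) ^ 2) := by
    rw [frob]
    congr 1
    exact (Fintype.sum_prod_type (f := fun x : Fin p × Fin p => (A x.1 x.2) ^ 2)).symm
  have h3 : frob B = Real.sqrt (∑ x : Fin p × Fin p, (B x.1 x.2) ^ 2) := by
    rw [frob]
    congr 1
    exact (Fintype.sum_prod_type (f := fun x : Fin p × Fin p => (B x.1 x.2) ^ 2)).symm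
  rw [h1, h2, h3]
  exact Real.sum_mul_le_sqrt_mul_sqrt _ _ _

lemma frob_lb {p : ℕ} (A D E : Matrix (Fin p) (Fin p) ℝ) (h1 : frob E ≤ 1)
    (h2 : A ≠ 0 → E = (frob A)⁻¹ • A) : frob A + mip E D ≤ frob (A + D) := by
  have hEA : mip E A = frob A := by
    by_cases hA : A = 0
    · simp [hA, frob_zero, mip]
    · rw [h2 hA, mip_smul_left]
      have h3 : mip A A = frob A ^ 2 := (frob_sq A).symm
      rw [h3, sq]
      field_simp [(frob_pos A hA).ne']
  have hCS : mip E (A + D) ≤ frob E * frob (A + D) := mip_cs _ _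
  have h4 : frob E * frob (A + D) ≤ 1 * frob (A + D) :=
    mul_le_mul_of_nonneg_right h1 (frob_nonneg _)
  have h5 : mip E (A + D) = mip E A + mip E D := mip_add_right _ _ _
  rw [one_mul] at h4
  linarith

lemma abs_lb (x d e : ℝ) (h1 : |e| ≤ 1) (h2 : x ≠ 0 → e = Real.sign x) :
    |x| + e * d ≤ |x + d| := by
  have hex : e * x = |x| := by
    by_cases hx : x = 0
    · simp [hx]
    · rw [h2 hx]
      rcases lt_or_gt_of_ne hx with h | h
      · rw [Real.sign_of_neg h, abs_of_neg h]; ring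
      · rw [Real.sign_of_pos h, abs_of_pos h]; ring
  have h3 : e * (x + d) ≤ |x + d| := by
    calc e * (x + d) ≤ |e * (x + d)| := le_abs_self _
      _ = |e| * |x + d| := abs_mul _ _
      _ ≤ 1 * |x + d| := mul_le_mul_of_nonneg_right h1 (abs_nonneg _)
      _ = |x + d| := one_mul _
  calc |x| + e * d = e * (x + d) := by rw [← hex]; ring
    _ ≤ |x + d| := h3

lemma mquad {p : ℕ} (A D : Matrix (Fin p) (Fin p) ℝ) :
    frob (A - D) ^ 2 = frob A ^ 2 + (2 * mip (-A) D + mip D D) := by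
  rw [frob_sq, frob_sq, mip_sub_left, mip_sub_right, mip_sub_right, mip_neg_left,
    mip_comm D A]
  ring

lemma icc_zero_insert (m : ℕ) : Finset.Icc 0 m = insert 0 (Finset.Icc 1 m) := by
  ext x; simp; omega


lemma mip_self_eq_zero {p : ℕ} (A : Matrix (Fin p) (Fin p) ℝ) (h : mip A A ≤ 0)
    (u v : Fin p) : A u v = 0 := by
  have h3 := mip_self_entry A u v
  have h4 := mul_self_nonneg (A u v)
  exact mul_self_eq_zero.mp (le_antisymm (h3.trans h) h4)

/-- if a restricted (sparsity-constrained) minimizer of the block-wise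
criterion admits a dual certificate with strict dual feasibility on the inactive
coordinates, then every unrestricted minimizer vanishes on the inactive coordinates. -/
theorem stmt9 (p T m : ℕ) (hp : 1 ≤ p) (hT : 1 ≤ T)
    (X : ℕ → Fin p → ℝ) (lam1 lam2 : ℝ) (hlam1 : 0 ≤ lam1) (hlam2 : 0 < lam2)
    (Tc : ℕ → ℕ) (hT0 : Tc 0 = 1) (hTmono : ∀ j ≤ m, Tc j < Tc (j + 1))
    (hTlast : Tc (m + 1) = T + 1)
    (ξ1 : Fin p → Fin p → ℕ → ℝ)
    (hξ1 : ∀ u v : Fin p, u ≠ v → ∀ t ∈ Finset.Icc 1 T, 0 < ξ1 u v t)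
    (ξ2 : ℕ → ℝ) (hξ2 : ∀ j ∈ Finset.Icc 1 m, 0 < ξ2 j)
    (hξ20 : ξ2 0 = 0) (hξ2last : ξ2 (m + 1) = 0)
    (S : ℕ → Set (Fin p × Fin p))
    (Sigbar : ℕ → Matrix (Fin p) (Fin p) ℝ)
    (hsymm : ∀ j ∈ Finset.Icc 1 (m + 1), (Sigbar j).IsSymm)
    (hO : ∀ j ∈ Finset.Icc 1 (m + 1), ∀ u v : Fin p, u ≠ v → (u, v) ∉ S j →
      Sigbar j u v = 0)
    (hmin : ∀ Sig' : ℕ → Matrix (Fin p) (Fin p) ℝ,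
      (∀ j ∈ Finset.Icc 1 (m + 1), (Sig' j).IsSymm) →
      (∀ j ∈ Finset.Icc 1 (m + 1), ∀ u v : Fin p, u ≠ v → (u, v) ∉ S j →
        Sig' j u v = 0) →
      blockCrit p T m X lam1 lam2 Tc ξ1 ξ2 Sigbar
        ≤ blockCrit p T m X lam1 lam2 Tc ξ1 ξ2 Sig')
    (E1 : Fin p → Fin p → ℕ → ℝ) (E2 : ℕ → Matrix (Fin p) (Fin p) ℝ)
    (hE20 : E2 0 = 0) (hE2last : E2 (m + 1) = 0)
    (hE2symm : ∀ j ∈ Finset.Icc 1 m, (E2 j).IsSymm)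
    -- (a) entrywise subgradients
    (ha : ∀ u v : Fin p, u ≠ v → ∀ t ∈ Finset.Icc 1 T, -1 ≤ E1 u v t ∧ E1 u v t ≤ 1)
    (ha' : ∀ j ∈ Finset.Icc 1 (m + 1), ∀ u v : Fin p, u ≠ v →
      ∀ t ∈ Finset.Ico (Tc (j - 1)) (Tc j), Sigbar j u v ≠ 0 →
        E1 u v t = Real.sign (Sigbar j u v))
    -- (b) fused subgradients
    (hb : ∀ j ∈ Finset.Icc 1 m, frob (E2 j) ≤ 1)
    (hb' : ∀ j ∈ Finset.Icc 1 m, Sigbar (j + 1) ≠ Sigbar j →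
      E2 j = (frob (Sigbar (j + 1) - Sigbar j))⁻¹ • (Sigbar (j + 1) - Sigbar j))
    -- (c) block-wise stationarity
    (hc : ∀ j ∈ Finset.Icc 1 (m + 1),
      (1 / (T : ℝ)) • (∑ t ∈ Finset.Ico (Tc (j - 1)) (Tc j),
          (Sigbar j - Matrix.vecMulVec (X t) (X t)))
      + lam1 • (∑ t ∈ Finset.Ico (Tc (j - 1)) (Tc j),
          (Matrix.of fun u v => if u = v then (0 : ℝ) else ξ1 u v t * E1 u v t))
      + lam2 • (ξ2 (j - 1) • E2 (j - 1) - ξ2 j • E2 j) = 0)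
    -- (d) strict dual feasibility on inactive coordinates
    (hd : ∀ j ∈ Finset.Icc 1 (m + 1), ∀ u v : Fin p, u ≠ v → (u, v) ∉ S j →
      |∑ t ∈ Finset.Ico (Tc (j - 1)) (Tc j), ξ1 u v t * E1 u v t|
        < ∑ t ∈ Finset.Ico (Tc (j - 1)) (Tc j), ξ1 u v t) :
    ∀ Sighat : ℕ → Matrix (Fin p) (Fin p) ℝ,
      (∀ j ∈ Finset.Icc 1 (m + 1), (Sighat j).IsSymm) →
      (∀ Sig' : ℕ → Matrix (Fin p) (Fin p) ℝ,
        (∀ j ∈ Finset.Icc 1 (m + 1), (Sig' j).IsSymm) →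
        blockCrit p T m X lam1 lam2 Tc ξ1 ξ2 Sighat
          ≤ blockCrit p T m X lam1 lam2 Tc ξ1 ξ2 Sig') →
      ∀ j ∈ Finset.Icc 1 (m + 1), ∀ u v : Fin p, u ≠ v → (u, v) ∉ S j →
        Sighat j u v = 0 := by
  intro Sighat hsymmhat hminhat j hj u v huv hS
  have hTpos : (0:ℝ) < (T:ℝ) := by exact_mod_cast Nat.lt_of_lt_of_le Nat.zero_lt_one hT
  have hTne : (T:ℝ) ≠ 0 := ne_of_gt hTpos
  have hmono : ∀ b, b ≤ m + 1 → ∀ a, a ≤ b → Tc a ≤ Tc b := by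
    intro b
    induction b with
    | zero => intro _ a ha; have : a = 0 := by omega
              rw [this]
    | succ n ih =>
      intro hn a ha
      by_cases hcase : a = n + 1
      · rw [hcase]
      · have h1 : Tc a ≤ Tc n := ih (by omega) a (by omega)
        have h2 : Tc n < Tc (n + 1) := hTmono n (by omega)
        omega
  have hBsub : ∀ k ∈ Finset.Icc 1 (m+1), Finset.Ico (Tc (k-1)) (Tc k) ⊆ Finset.Icc 1 T := by
    intro k hk t ht
    simp only [Finset.mem_Icc] at hk
    simp only [Finset.mem_Ico] at ht
    simp only [Finset.mem_Icc]
    have h1 : Tc 0 ≤ Tc (k-1) := hmono (k-1) (by omega) 0 (by omega)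
    have h2 : Tc k ≤ Tc (m+1) := hmono (m+1) le_rfl k (by omega)
    omega
  -- per-block quadratic expansion
  have hq : ∀ k ∈ Finset.Icc 1 (m+1),
      (1 / (2 * (T : ℝ))) * ∑ t ∈ Finset.Ico (Tc (k - 1)) (Tc k),
          (frob (Matrix.vecMulVec (X t) (X t) - Sighat k)) ^ 2
      = (1 / (2 * (T : ℝ))) * ∑ t ∈ Finset.Ico (Tc (k - 1)) (Tc k),
          (frob (Matrix.vecMulVec (X t) (X t) - Sigbar k)) ^ 2
        + ((1 / (T : ℝ)) * mip (∑ t ∈ Finset.Ico (Tc (k - 1)) (Tc k),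
              (Sigbar k - Matrix.vecMulVec (X t) (X t))) (Sighat k - Sigbar k)
          + (1 / (2 * (T : ℝ))) * ∑ t ∈ Finset.Ico (Tc (k - 1)) (Tc k),
              mip (Sighat k - Sigbar k) (Sighat k - Sigbar k)) := by
    intro k hk
    have hper : ∀ t : ℕ, (frob (Matrix.vecMulVec (X t) (X t) - Sighat k)) ^ 2
        = (frob (Matrix.vecMulVec (X t) (X t) - Sigbar k)) ^ 2
          + (2 * mip (Sigbar k - Matrix.vecMulVec (X t) (X t)) (Sighat k - Sigbar k)
            + mip (Sighat k - Sigbar k) (Sighat k - Sigbar k)) := by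
      intro t
      have h1 : Matrix.vecMulVec (X t) (X t) - Sighat k
          = (Matrix.vecMulVec (X t) (X t) - Sigbar k) - (Sighat k - Sigbar k) := by abel
      rw [h1, mquad, neg_sub]
    have e1 : ∑ t ∈ Finset.Ico (Tc (k - 1)) (Tc k),
        (frob (Matrix.vecMulVec (X t) (X t) - Sighat k)) ^ 2
        = ∑ t ∈ Finset.Ico (Tc (k - 1)) (Tc k),
            (frob (Matrix.vecMulVec (X t) (X t) - Sigbar k)) ^ 2
          + (2 * ∑ t ∈ Finset.Ico (Tc (k - 1)) (Tc k),
              mip (Sigbar k - Matrix.vecMulVec (X t) (X t)) (Sighat k - Sigbar k)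
            + ∑ t ∈ Finset.Ico (Tc (k - 1)) (Tc k),
              mip (Sighat k - Sigbar k) (Sighat k - Sigbar k)) := by
      rw [Finset.mul_sum, ← Finset.sum_add_distrib, ← Finset.sum_add_distrib]
      exact Finset.sum_congr rfl fun t _ => hper t
    have e2 : mip (∑ t ∈ Finset.Ico (Tc (k - 1)) (Tc k),
          (Sigbar k - Matrix.vecMulVec (X t) (X t))) (Sighat k - Sigbar k)
        = ∑ t ∈ Finset.Ico (Tc (k - 1)) (Tc k),
            mip (Sigbar k - Matrix.vecMulVec (X t) (X t)) (Sighat k - Sigbar k) :=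
      mip_sum_left _ _ _
    rw [e1, e2]
    field_simp
  -- per-block lasso penalty inequality
  have hpen : ∀ k ∈ Finset.Icc 1 (m+1),
      (∑ a, ∑ b, (if a ≠ b then
          (∑ t ∈ Finset.Ico (Tc (k - 1)) (Tc k), ξ1 a b t) * |Sigbar k a b| else 0))
        + mip (∑ t ∈ Finset.Ico (Tc (k - 1)) (Tc k),
            (Matrix.of fun x y => if x = y then (0:ℝ) else ξ1 x y t * E1 x y t))
            (Sighat k - Sigbar k)
      ≤ ∑ a, ∑ b, (if a ≠ b then
          (∑ t ∈ Finset.Ico (Tc (k - 1)) (Tc k), ξ1 a b t) * |Sighat k a b| else 0) := by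
    intro k hk
    simp only [mip]
    rw [← Finset.sum_add_distrib]
    refine Finset.sum_le_sum fun a _ => ?_
    rw [← Finset.sum_add_distrib]
    refine Finset.sum_le_sum fun b _ => ?_
    have hMe : (∑ t ∈ Finset.Ico (Tc (k - 1)) (Tc k),
        (Matrix.of fun x y => if x = y then (0:ℝ) else ξ1 x y t * E1 x y t)) a b
        = ∑ t ∈ Finset.Ico (Tc (k - 1)) (Tc k),
            (if a = b then (0:ℝ) else ξ1 a b t * E1 a b t) := by
      simp [Matrix.sum_apply]
    rw [hMe, Matrix.sub_apply]
    by_cases hab : a = b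
    · simp [hab]
    · simp only [if_neg hab]
      rw [if_pos hab, if_pos hab]
      rw [Finset.sum_mul, Finset.sum_mul, Finset.sum_mul, ← Finset.sum_add_distrib]
      refine Finset.sum_le_sum fun t ht => ?_
      have htT : t ∈ Finset.Icc 1 T := hBsub k hk ht
      have hξpos := hξ1 a b hab t htT
      have habs := abs_lb (Sigbar k a b) (Sighat k a b - Sigbar k a b) (E1 a b t)
        (abs_le.mpr (ha a b hab t htT))
        (fun hx => ha' k hk a b hab t ht hx)
      have hx2 : Sigbar k a b + (Sighat k a b - Sigbar k a b) = Sighat k a b := by ring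
      rw [hx2] at habs
      calc ξ1 a b t * |Sigbar k a b|
            + ξ1 a b t * E1 a b t * (Sighat k a b - Sigbar k a b)
          = ξ1 a b t * (|Sigbar k a b|
              + E1 a b t * (Sighat k a b - Sigbar k a b)) := by ring
        _ ≤ ξ1 a b t * |Sighat k a b| := mul_le_mul_of_nonneg_left habs hξpos.le
  -- per-junction fused penalty inequality
  have hfus : ∀ k ∈ Finset.Icc 1 m,
      ξ2 k * frob (Sigbar (k+1) - Sigbar k)
        + ξ2 k * mip (E2 k) ((Sighat (k+1) - Sigbar (k+1)) - (Sighat k - Sigbar k))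
      ≤ ξ2 k * frob (Sighat (k+1) - Sighat k) := by
    intro k hk
    have h1 : Sighat (k+1) - Sighat k
        = (Sigbar (k+1) - Sigbar k)
          + ((Sighat (k+1) - Sigbar (k+1)) - (Sighat k - Sigbar k)) := by abel
    rw [h1, ← mul_add]
    refine mul_le_mul_of_nonneg_left ?_ (hξ2 k hk).le
    refine frob_lb _ _ _ (hb k hk) ?_
    intro hne
    exact hb' k hk (sub_ne_zero.mp hne)
  -- telescoping identity
  have htel : ∑ k ∈ Finset.Icc 1 m,
      ξ2 k * mip (E2 k) ((Sighat (k+1) - Sigbar (k+1)) - (Sighat k - Sigbar k))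
      = ∑ k ∈ Finset.Icc 1 (m+1),
        mip (ξ2 (k-1) • E2 (k-1) - ξ2 k • E2 k) (Sighat k - Sigbar k) := by
    have hL : ∀ k : ℕ,
        ξ2 k * mip (E2 k) ((Sighat (k+1) - Sigbar (k+1)) - (Sighat k - Sigbar k))
        = ξ2 k * mip (E2 k) (Sighat (k+1) - Sigbar (k+1))
          - ξ2 k * mip (E2 k) (Sighat k - Sigbar k) := by
      intro k; rw [mip_sub_right]; ring
    have hR : ∀ k : ℕ, mip (ξ2 (k-1) • E2 (k-1) - ξ2 k • E2 k) (Sighat k - Sigbar k)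
        = ξ2 (k-1) * mip (E2 (k-1)) (Sighat k - Sigbar k)
          - ξ2 k * mip (E2 k) (Sighat k - Sigbar k) := by
      intro k; rw [mip_sub_left, mip_smul_left, mip_smul_left]
    simp only [hL, hR]
    rw [Finset.sum_sub_distrib, Finset.sum_sub_distrib]
    congr 1
    · have hmap : (Finset.Icc 0 m).map (addRightEmbedding 1) = Finset.Icc 1 (m+1) :=
        Finset.map_add_right_Icc 0 m 1
      rw [← hmap, Finset.sum_map]
      simp only [addRightEmbedding_apply, Nat.add_sub_cancel]
      rw [icc_zero_insert, Finset.sum_insert (by simp), hξ20]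
      simp
    · rw [Finset.sum_Icc_succ_top (by omega : 1 ≤ m + 1), hξ2last]
      simp
  -- stationarity in inner-product form
  have hzero : ∀ k ∈ Finset.Icc 1 (m+1),
      (1 / (T : ℝ)) * mip (∑ t ∈ Finset.Ico (Tc (k - 1)) (Tc k),
            (Sigbar k - Matrix.vecMulVec (X t) (X t))) (Sighat k - Sigbar k)
        + lam1 * mip (∑ t ∈ Finset.Ico (Tc (k - 1)) (Tc k),
            (Matrix.of fun x y => if x = y then (0:ℝ) else ξ1 x y t * E1 x y t))
            (Sighat k - Sigbar k)
        + lam2 * mip (ξ2 (k-1) • E2 (k-1) - ξ2 k • E2 k) (Sighat k - Sigbar k) = 0 := by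
    intro k hk
    have h1 := congrArg (fun A => mip A (Sighat k - Sigbar k)) (hc k hk)
    simp only [mip_add_left, mip_smul_left, mip_zero_left] at h1
    exact h1
  -- the key inequality
  have hkey : blockCrit p T m X lam1 lam2 Tc ξ1 ξ2 Sigbar
      + ∑ k ∈ Finset.Icc 1 (m+1), (1 / (2 * (T : ℝ))) *
          ∑ t ∈ Finset.Ico (Tc (k - 1)) (Tc k),
            mip (Sighat k - Sigbar k) (Sighat k - Sigbar k)
      ≤ blockCrit p T m X lam1 lam2 Tc ξ1 ξ2 Sighat := by
    have A1 : ∑ k ∈ Finset.Icc 1 (m+1), (1 / (2 * (T : ℝ))) *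
          ∑ t ∈ Finset.Ico (Tc (k - 1)) (Tc k),
            (frob (Matrix.vecMulVec (X t) (X t) - Sighat k)) ^ 2
        = ∑ k ∈ Finset.Icc 1 (m+1), ((1 / (2 * (T : ℝ))) *
            ∑ t ∈ Finset.Ico (Tc (k - 1)) (Tc k),
              (frob (Matrix.vecMulVec (X t) (X t) - Sigbar k)) ^ 2
          + ((1 / (T : ℝ)) * mip (∑ t ∈ Finset.Ico (Tc (k - 1)) (Tc k),
                (Sigbar k - Matrix.vecMulVec (X t) (X t))) (Sighat k - Sigbar k)
            + (1 / (2 * (T : ℝ))) * ∑ t ∈ Finset.Ico (Tc (k - 1)) (Tc k),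
                mip (Sighat k - Sigbar k) (Sighat k - Sigbar k))) :=
      Finset.sum_congr rfl hq
    rw [Finset.sum_add_distrib, Finset.sum_add_distrib] at A1
    have A2 : ∑ k ∈ Finset.Icc 1 (m+1), ((∑ a, ∑ b, (if a ≠ b then
          (∑ t ∈ Finset.Ico (Tc (k - 1)) (Tc k), ξ1 a b t) * |Sigbar k a b| else 0))
        + mip (∑ t ∈ Finset.Ico (Tc (k - 1)) (Tc k),
            (Matrix.of fun x y => if x = y then (0:ℝ) else ξ1 x y t * E1 x y t))
            (Sighat k - Sigbar k))
        ≤ ∑ k ∈ Finset.Icc 1 (m+1), ∑ a, ∑ b, (if a ≠ b then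
          (∑ t ∈ Finset.Ico (Tc (k - 1)) (Tc k), ξ1 a b t) * |Sighat k a b| else 0) :=
      Finset.sum_le_sum hpen
    rw [Finset.sum_add_distrib] at A2
    have A3 : ∑ k ∈ Finset.Icc 1 m, (ξ2 k * frob (Sigbar (k+1) - Sigbar k)
        + ξ2 k * mip (E2 k) ((Sighat (k+1) - Sigbar (k+1)) - (Sighat k - Sigbar k)))
        ≤ ∑ k ∈ Finset.Icc 1 m, ξ2 k * frob (Sighat (k+1) - Sighat k) :=
      Finset.sum_le_sum hfus
    rw [Finset.sum_add_distrib, htel] at A3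
    have A4 : ∑ k ∈ Finset.Icc 1 (m+1), ((1 / (T : ℝ)) *
          mip (∑ t ∈ Finset.Ico (Tc (k - 1)) (Tc k),
            (Sigbar k - Matrix.vecMulVec (X t) (X t))) (Sighat k - Sigbar k))
        + (lam1 * ∑ k ∈ Finset.Icc 1 (m+1),
            mip (∑ t ∈ Finset.Ico (Tc (k - 1)) (Tc k),
              (Matrix.of fun x y => if x = y then (0:ℝ) else ξ1 x y t * E1 x y t))
              (Sighat k - Sigbar k)
          + lam2 * ∑ k ∈ Finset.Icc 1 (m+1),
              mip (ξ2 (k-1) • E2 (k-1) - ξ2 k • E2 k) (Sighat k - Sigbar k)) = 0 := by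
      rw [Finset.mul_sum, Finset.mul_sum, ← Finset.sum_add_distrib,
        ← Finset.sum_add_distrib]
      refine Finset.sum_eq_zero fun k hk => ?_
      have := hzero k hk
      linarith
    have hble := mul_le_mul_of_nonneg_left A2 hlam1
    rw [mul_add] at hble
    have hble2 := mul_le_mul_of_nonneg_left A3 hlam2.le
    rw [mul_add] at hble2
    simp only [blockCrit]
    linarith
  have hle := hminhat Sigbar hsymm
  have hsumle : ∑ k ∈ Finset.Icc 1 (m+1), (1 / (2 * (T : ℝ))) *
      ∑ t ∈ Finset.Ico (Tc (k - 1)) (Tc k),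
        mip (Sighat k - Sigbar k) (Sighat k - Sigbar k) ≤ 0 := by linarith
  have hnn : ∀ k ∈ Finset.Icc 1 (m+1), 0 ≤ (1 / (2 * (T : ℝ))) *
      ∑ t ∈ Finset.Ico (Tc (k - 1)) (Tc k),
        mip (Sighat k - Sigbar k) (Sighat k - Sigbar k) := fun k _ =>
    mul_nonneg (by positivity) (Finset.sum_nonneg fun _ _ => mip_self_nonneg _)
  have hall := (Finset.sum_eq_zero_iff_of_nonneg hnn).mp
    (le_antisymm hsumle (Finset.sum_nonneg hnn)) j hj
  have hjIcc : 1 ≤ j ∧ j ≤ m + 1 := by simpa using hj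
  have hBne : Tc (j - 1) < Tc j := by
    have h2 := hTmono (j-1) (by omega)
    have h3 : j - 1 + 1 = j := by omega
    rwa [h3] at h2
  have hcard : 0 < (Finset.Ico (Tc (j-1)) (Tc j)).card := by
    rw [Nat.card_Ico]; omega
  have hpos2 : (0:ℝ) < 1 / (2 * (T : ℝ)) := by
    apply one_div_pos.mpr; linarith
  have hsz : ∑ t ∈ Finset.Ico (Tc (j-1)) (Tc j),
      mip (Sighat j - Sigbar j) (Sighat j - Sigbar j) = 0 :=
    (mul_eq_zero.mp hall).resolve_left (ne_of_gt hpos2)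
  rw [Finset.sum_const, nsmul_eq_mul] at hsz
  have hc2 : (0:ℝ) < ((Finset.Ico (Tc (j-1)) (Tc j)).card : ℝ) := by exact_mod_cast hcard
  have hmipz : mip (Sighat j - Sigbar j) (Sighat j - Sigbar j) = 0 := by
    rcases mul_eq_zero.mp hsz with h | h
    · exact absurd h (ne_of_gt hc2)
    · exact h
  have hd0 : (Sighat j - Sigbar j) u v = 0 := mip_self_eq_zero _ hmipz.le u v
  have hbar := hO j hj u v huv hS
  have hfin : Sighat j u v - Sigbar j u v = 0 := by
    simpa [Matrix.sub_apply] using hd0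
  linarith
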